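/- If a group G is not torsion-free (some nonidentity element has finite order), then G admits no midpointed convexoid. -/

import Mathlib

open Pointwise

attribute [local instance] Classical.propDecidable

/-- The closure of a finite set `B`: intersection of all members of `𝒞` containing `B`. -/
def memClosure {G : Type*} (𝒞 : Set (Finset G)) (B : Finset G) : Set G :=
  {x | ∀ C ∈ 𝒞, B ⊆ C → x ∈ C}

/-- A convexoid: `∅` is a member, every finite set is contained in some member, and the
corner addition property holds. -/
def IsConvexoid {G : Type*} (𝒞 : Set (Finset G)) : Prop :=
  (∅ : Finset G) ∈ 𝒞 ∧ (∀ B : Finset G, ∃ C ∈ 𝒞, B ⊆ C) ∧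
    ∀ C ∈ 𝒞, ∀ D ∈ 𝒞, C ⊂ D → ∃ a ∈ D, a ∉ C ∧ insert a C ∈ 𝒞

section Aux

variable {G : Type*} [Group G] {𝒞 : Set (Finset G)} {p : ℕ} [NeZero p] {u : G}

/-- `u` raised to a `ZMod p` exponent. -/
noncomputable def fpow (u : G) {p : ℕ} [NeZero p] (k : ZMod p) : G := u ^ k.val

lemma fpow_add (hu : orderOf u = p) (a b : ZMod p) :
    fpow u (a + b) = fpow u a * fpow u b := by
  unfold fpow
  rw [← pow_add, pow_eq_pow_iff_modEq, hu, ZMod.val_add]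
  exact Nat.mod_modEq _ _

lemma fpow_zero : fpow u (0 : ZMod p) = 1 := by
  simp [fpow, ZMod.val_zero]

lemma fpow_injective (hu : orderOf u = p) :
    Function.Injective (fpow u : ZMod p → G) := by
  intro a b hab
  unfold fpow at hab
  rw [pow_eq_pow_iff_modEq, hu] at hab
  have h2 : a.val = b.val := by
    rwa [Nat.ModEq, Nat.mod_eq_of_lt (ZMod.val_lt a), Nat.mod_eq_of_lt (ZMod.val_lt b)] at hab
  calc a = ((a.val : ℕ) : ZMod p) := (ZMod.natCast_rightInverse a).symm
    _ = ((b.val : ℕ) : ZMod p) := by rw [h2]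
    _ = b := ZMod.natCast_rightInverse b

lemma fpow_pow (hu : orderOf u = p) (m : ℕ) (k : ZMod p) :
    (fpow u k) ^ m = fpow u ((m : ZMod p) * k) := by
  induction m with
  | zero => simp [fpow_zero]
  | succ m ih =>
      rw [pow_succ, ih, ← fpow_add hu]
      congr 1
      push_cast
      ring

omit [NeZero p] in
lemma two_ne_zero_zmod (hp : p.Prime) (hp2 : p ≠ 2) : (2 : ZMod p) ≠ 0 := by
  intro h
  have h4 : ((2 : ℕ) : ZMod p) = 0 := by exact_mod_cast h
  rw [ZMod.natCast_eq_zero_iff] at h4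
  exact hp2 ((Nat.prime_dvd_prime_iff_eq hp Nat.prime_two).mp h4)

/-- The halving property from midpointedness. -/
lemma half_mem (hmid : ∀ g h : G, g ∈ memClosure 𝒞 {g * h, g * h⁻¹})
    {C : Finset G} (hC : C ∈ 𝒞) (x t : G) (hx : x ∈ C) (hxt : x * t ^ 2 ∈ C) :
    x * t ∈ C := by
  apply hmid (x * t) t C hC
  intro y hy
  rcases Finset.mem_insert.mp hy with rfl | hy
  · simpa [pow_two, mul_assoc] using hxt
  · rw [Finset.mem_singleton] at hy
    subst hy
    simpa [mul_assoc] using hx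

/-- The coset-filling property for elements of odd prime order. -/
lemma fill_mem (hmid : ∀ g h : G, g ∈ memClosure 𝒞 {g * h, g * h⁻¹})
    (hp : p.Prime) (hp2 : p ≠ 2) (hu : orderOf u = p)
    {C : Finset G} (hC : C ∈ 𝒞) {x : G} (hx : x ∈ C) (hxu : x * u ∈ C)
    (k : ZMod p) : x * fpow u k ∈ C := by
  haveI : Fact p.Prime := ⟨hp⟩
  set e : ZMod p := (2 : ZMod p)⁻¹ with he_def
  have h2 : (2 : ZMod p) ≠ 0 := two_ne_zero_zmod hp hp2
  have he : 2 * e = 1 := mul_inv_cancel₀ h2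
  have step : ∀ a c : ZMod p, x * fpow u a ∈ C → x * fpow u c ∈ C →
      x * fpow u ((a + c) * e) ∈ C := by
    intro a c ha hc
    have h1 : (x * fpow u a) * (fpow u ((c - a) * e)) ^ 2 ∈ C := by
      rw [fpow_pow hu, mul_assoc, ← fpow_add hu]
      have harith : a + ((2 : ℕ) : ZMod p) * ((c - a) * e) = c := by
        push_cast
        linear_combination (c - a) * he
      rwa [harith]
    have h3 := half_mem hmid hC (x * fpow u a) (fpow u ((c - a) * e)) ha h1
    rw [mul_assoc, ← fpow_add hu] at h3
    have harith2 : a + (c - a) * e = (a + c) * e := by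
      linear_combination (-a) * he
    rwa [harith2] at h3
  have key : ∀ j : ℕ, ∀ b : ℕ, b ≤ 2 ^ j → x * fpow u ((b : ZMod p) * e ^ j) ∈ C := by
    intro j
    induction j with
    | zero =>
        intro b hb
        interval_cases b
        · simpa [fpow_zero] using hx
        · have hval1 : fpow u ((1 : ZMod p) * e ^ 0) = u := by
            have : ((1 : ZMod p) * e ^ 0) = ((1 : ℕ) : ZMod p) := by push_cast; ring
            rw [this]
            unfold fpow
            rw [ZMod.val_cast_of_lt hp.one_lt, pow_one]
          simp only [Nat.cast_one]
          rw [hval1]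
          exact hxu
    | succ j ih =>
        intro b hb
        set b1 := min b (2 ^ j) with hb1def
        set b2 := b - b1 with hb2def
        have hb1 : b1 ≤ 2 ^ j := min_le_right _ _
        have hb2 : b2 ≤ 2 ^ j := by
          have h2j : 2 ^ (j + 1) = 2 ^ j + 2 ^ j := by ring
          omega
        have hsum : b1 + b2 = b := by omega
        have h1 := ih b1 hb1
        have h2' := ih b2 hb2
        have h3 := step _ _ h1 h2'
        have harith : (((b1 : ZMod p) * e ^ j + (b2 : ZMod p) * e ^ j)) * e
            = (b : ZMod p) * e ^ (j + 1) := by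
          rw [← hsum]
          push_cast
          ring
        rwa [harith] at h3
  have heu : e ≠ 0 := inv_ne_zero h2
  have hej : e ^ (p - 1) = 1 := ZMod.pow_card_sub_one_eq_one heu
  have hkval : k.val ≤ 2 ^ (p - 1) := by
    have h1 : k.val < p := ZMod.val_lt k
    have h2'' : p - 1 < 2 ^ (p - 1) := Nat.lt_two_pow_self
    omega
  have hfin := key (p - 1) k.val hkval
  rwa [hej, mul_one, ZMod.natCast_rightInverse k] at hfin

end Aux

/-- A group that is not torsion-free (some nonidentity element has finite order) admits
no midpointed convexoid. -/
theorem stmt16 {G : Type*} [Group G] (hG : ∃ g : G, g ≠ 1 ∧ IsOfFinOrder g) :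
    ¬ ∃ 𝒞 : Set (Finset G), IsConvexoid 𝒞 ∧
        ∀ g h : G, g ∈ memClosure 𝒞 {g * h, g * h⁻¹} := by
  rintro ⟨𝒞, ⟨hempty, hbig, hcorner⟩, hmid⟩
  obtain ⟨g, hg1, hgfin⟩ := hG
  set n := orderOf g with hn_def
  have hn1 : n ≠ 1 := fun h => hg1 (orderOf_eq_one_iff.mp h)
  have hn0 : 0 < n := hgfin.orderOf_pos
  set p := n.minFac with hp_def
  have hp : p.Prime := Nat.minFac_prime hn1
  have hpd : p ∣ n := Nat.minFac_dvd n
  haveI : Fact p.Prime := ⟨hp⟩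
  set u := g ^ (n / p) with hu_def
  have hnp0 : n / p ≠ 0 := by
    have := Nat.div_pos (Nat.le_of_dvd hn0 hpd) hp.pos
    omega
  have hu : orderOf u = p := by
    rw [hu_def, orderOf_pow' g hnp0, ← hn_def]
    have hgcd : Nat.gcd n (n / p) = n / p := Nat.gcd_eq_right (Nat.div_dvd_of_dvd hpd)
    rw [hgcd, Nat.div_div_self hpd (by omega)]
  have hu1 : u ≠ 1 := by
    intro h
    rw [h, orderOf_one] at hu
    have := hp.one_lt
    omega
  by_cases hp2 : p = 2
  · -- even case: u has order 2
    have hu2 : u * u = 1 := by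
      have h := pow_orderOf_eq_one u
      rwa [hu, hp2, pow_two] at h
    obtain ⟨D, hD, hD1⟩ := hbig {1}
    have hDne : (∅ : Finset G) ⊂ D := by
      rw [Finset.ssubset_iff_of_subset (Finset.empty_subset D)]
      exact ⟨1, hD1 (Finset.mem_singleton_self 1), Finset.notMem_empty 1⟩
    obtain ⟨a, haD, -, haC⟩ := hcorner ∅ hempty D hD hDne
    have hmem : a * u ∈ (insert a ∅ : Finset G) := by
      apply hmid (a * u) u _ haC
      intro y hy
      rcases Finset.mem_insert.mp hy with rfl | hy
      · simp [mul_assoc, hu2]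
      · rw [Finset.mem_singleton] at hy
        subst hy
        simp [mul_assoc]
    rcases Finset.mem_insert.mp hmem with h | h
    · exact hu1 (mul_left_cancel (h.trans (mul_one a).symm))
    · exact absurd h (Finset.notMem_empty _)
  · -- odd case
    set H : Finset G := Finset.image (fun k : ZMod p => fpow u k) Finset.univ with hH_def
    have hfinj : Function.Injective (fpow u : ZMod p → G) := fpow_injective hu
    have hHcard : H.card = p := by
      rw [hH_def, Finset.card_image_of_injective _ hfinj, Finset.card_univ, ZMod.card]
    obtain ⟨D, hD, hHD⟩ := hbig H
    have hp3 : 3 ≤ p := by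
      have := hp.two_le
      omega
    have climb : ∀ m : ℕ, ∀ C ∈ 𝒞, C ⊆ D → (D \ C).card ≤ m → (C ∩ H).card ≤ 1 →
        ∃ C' ∈ 𝒞, (C' ∩ H).card = 2 := by
      intro m
      induction m with
      | zero =>
          intro C hC hCD hcard htr
          exfalso
          have hDC : D ⊆ C := by
            intro y hy
            by_contra hyC
            have hm : y ∈ D \ C := Finset.mem_sdiff.mpr ⟨hy, hyC⟩
            have := Finset.card_pos.mpr ⟨y, hm⟩
            omega
          have hHC : H ⊆ C ∩ H := fun y hy =>
            Finset.mem_inter.mpr ⟨hDC (hHD hy), hy⟩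
          have := Finset.card_le_card hHC
          omega
      | succ m ih =>
          intro C hC hCD hcard htr
          by_cases hCDeq : C = D
          · exfalso
            subst hCDeq
            have hHC : H ⊆ C ∩ H := fun y hy =>
              Finset.mem_inter.mpr ⟨hHD hy, hy⟩
            have := Finset.card_le_card hHC
            omega
          · obtain ⟨a, haD, haC, hins⟩ :=
              hcorner C hC D hD ⟨hCD, fun h => hCDeq (Finset.Subset.antisymm hCD h)⟩
            have htr' : ((insert a C) ∩ H).card ≤ 2 := by
              have hsub : (insert a C) ∩ H ⊆ insert a (C ∩ H) := by
                intro y hy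
                rw [Finset.mem_inter] at hy
                rcases Finset.mem_insert.mp hy.1 with rfl | hyC
                · exact Finset.mem_insert_self _ _
                · exact Finset.mem_insert_of_mem (Finset.mem_inter.mpr ⟨hyC, hy.2⟩)
              calc ((insert a C) ∩ H).card ≤ (insert a (C ∩ H)).card :=
                    Finset.card_le_card hsub
                _ ≤ (C ∩ H).card + 1 := Finset.card_insert_le _ _
                _ ≤ 2 := by omega
            by_cases h2 : ((insert a C) ∩ H).card = 2
            · exact ⟨_, hins, h2⟩
            · apply ih _ hins (Finset.insert_subset haD hCD)
              · have hsd : D \ insert a C = (D \ C).erase a := by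
                  ext y
                  simp only [Finset.mem_sdiff, Finset.mem_erase, Finset.mem_insert]
                  tauto
                have hamem : a ∈ D \ C := Finset.mem_sdiff.mpr ⟨haD, haC⟩
                rw [hsd, Finset.card_erase_of_mem hamem]
                have := Finset.card_pos.mpr ⟨a, hamem⟩
                omega
              · omega
    obtain ⟨C, hC, h2⟩ :=
      climb (D \ ∅).card ∅ hempty (Finset.empty_subset D) le_rfl (by simp)
    obtain ⟨a, b, hab, hCH⟩ := Finset.card_eq_two.mp h2
    have haCH : a ∈ C ∩ H := by rw [hCH]; exact Finset.mem_insert_self _ _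
    have hbCH : b ∈ C ∩ H := by
      rw [hCH]; exact Finset.mem_insert_of_mem (Finset.mem_singleton_self b)
    obtain ⟨haC, haH⟩ := Finset.mem_inter.mp haCH
    obtain ⟨hbC, hbH⟩ := Finset.mem_inter.mp hbCH
    obtain ⟨α, -, hα⟩ := Finset.mem_image.mp haH
    obtain ⟨β, -, hβ⟩ := Finset.mem_image.mp hbH
    set γ := β - α with hγ_def
    have hγ0 : γ ≠ 0 := by
      intro h
      apply hab
      rw [← hα, ← hβ, sub_eq_zero.mp h]
    set s := fpow u γ with hs_def
    have hγval0 : γ.val ≠ 0 := by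
      intro h
      apply hγ0
      have hri := ZMod.natCast_rightInverse γ
      rw [← hri, h]
      simp
    have hs : orderOf s = p := by
      have hnd : ¬ p ∣ γ.val := by
        intro hdvd
        have := Nat.le_of_dvd (Nat.pos_of_ne_zero hγval0) hdvd
        have := ZMod.val_lt γ
        omega
      have hcop : Nat.gcd p γ.val = 1 := hp.coprime_iff_not_dvd.mpr hnd
      rw [hs_def]
      show orderOf (u ^ γ.val) = p
      rw [orderOf_pow' u hγval0, hu, hcop, Nat.div_one]
    have habs : a * s = b := by
      rw [← hα, ← hβ, hs_def, ← fpow_add hu]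
      congr 1
      rw [hγ_def]; ring
    have hfill := fill_mem hmid hp hp2 hs hC haC (by rw [habs]; exact hbC) (2 : ZMod p)
    have hfs2 : fpow s (2 : ZMod p) = s * s := by
      have h22 : ((2 : ZMod p)) = ((2 : ℕ) : ZMod p) := by push_cast; rfl
      unfold fpow
      rw [h22, ZMod.val_cast_of_lt (by omega), pow_two]
    rw [hfs2] at hfill
    have hthird : a * (s * s) = fpow u (β + γ) := by
      rw [← mul_assoc, habs, ← hβ, hs_def, ← fpow_add hu]
    have hthirdH : fpow u (β + γ) ∈ H := by
      rw [hH_def]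
      exact Finset.mem_image.mpr ⟨β + γ, Finset.mem_univ _, rfl⟩
    have hthirdCH : fpow u (β + γ) ∈ C ∩ H := by
      rw [← hthird] at hthirdH ⊢
      exact Finset.mem_inter.mpr ⟨hfill, hthirdH⟩
    rw [hCH, Finset.mem_insert, Finset.mem_singleton, ← hα, ← hβ] at hthirdCH
    have h2z : (2 : ZMod p) ≠ 0 := two_ne_zero_zmod hp hp2
    rcases hthirdCH with h | h
    · have heq := hfinj h
      have h2γ : (2 : ZMod p) * γ = 0 := by
        rw [hγ_def] at heq ⊢
        linear_combination heq
      rcases mul_eq_zero.mp h2γ with h' | h'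
      · exact h2z h'
      · exact hγ0 h'
    · have heq := hfinj h
      have : γ = 0 := by linear_combination heq
      exact hγ0 this
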